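/- Let ℓ ≥ 2 be an integer and let Δ ≥ 2 be an even integer. Then there exist simple graphs G₁, …, G_ℓ on a common finite vertex set, each of maximum degree at most Δ, such that every simultaneous edge-coloring of their union with respect to G₁, …, G_ℓ uses at least ⌊√(ℓ/2)⌋·Δ colors. -/

import Mathlib

/-- An edge-coloring `c` (a function on potential edges) is *simultaneous* with respect to
the family of graphs `G` if, for each `i`, any two distinct edges of `G i` sharing an
endpoint receive distinct colors. -/
def Simultaneous {V ι β : Type*} (G : ι → SimpleGraph V) (c : Sym2 V → β) : Prop :=
  ∀ i, ∀ e ∈ (G i).edgeSet, ∀ f ∈ (G i).edgeSet, e ≠ f → (∃ v, v ∈ e ∧ v ∈ f) → c e ≠ c f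

private def Half (Δ : ℕ) (t : Fin Δ) : Bool := decide (Δ / 2 ≤ t.val)

private def Mem' (k Δ : ℕ) (a b : Fin k) (c : Bool) (p : Fin k × Fin Δ) : Prop :=
  (p.1 = a ∧ Half Δ p.2 = c) ∨ (p.1 = b ∧ Half Δ p.2 = (if a < b then c else !c))

private lemma cover (k Δ : ℕ) (x y : Fin k × Fin Δ) :
    ∃ a b c, Mem' k Δ a b c x ∧ Mem' k Δ a b c y := by
  obtain ⟨j, t⟩ := x
  obtain ⟨j', t'⟩ := y
  rcases eq_or_ne j j' with rfl | hjj
  · refine ⟨j, j, Half Δ t, Or.inl ⟨rfl, rfl⟩, ?_⟩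
    by_cases h : Half Δ t' = Half Δ t
    · exact Or.inl ⟨rfl, h⟩
    · refine Or.inr ⟨rfl, ?_⟩
      rw [if_neg (lt_irrefl j)]
      cases hb : Half Δ t <;> cases hb' : Half Δ t' <;> simp_all
  · by_cases h1 : Half Δ t' = (if j < j' then Half Δ t else !(Half Δ t))
    · exact ⟨j, j', Half Δ t, Or.inl ⟨rfl, rfl⟩, Or.inr ⟨rfl, h1⟩⟩
    · refine ⟨j', j, Half Δ t', Or.inr ⟨rfl, ?_⟩, Or.inl ⟨rfl, rfl⟩⟩
      rcases lt_or_gt_of_ne hjj with hlt | hgt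
      · rw [if_neg (not_lt.mpr hlt.le)]
        rw [if_pos hlt] at h1
        cases hb : Half Δ t <;> cases hb' : Half Δ t' <;> simp_all
      · rw [if_pos hgt]
        rw [if_neg (not_lt.mpr hgt.le)] at h1
        cases hb : Half Δ t <;> cases hb' : Half Δ t' <;> simp_all

private def StarG (k Δ : ℕ) (a b : Fin k) (c : Bool) :
    SimpleGraph (Option (Fin k × Fin Δ)) :=
  SimpleGraph.fromEdgeSet {e | ∃ p, Mem' k Δ a b c p ∧ e = s(none, some p)}

private lemma starG_edge (k Δ : ℕ) (a b : Fin k) (c : Bool) (p : Fin k × Fin Δ)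
    (h : Mem' k Δ a b c p) : s(none, some p) ∈ (StarG k Δ a b c).edgeSet := by
  rw [StarG, SimpleGraph.edgeSet_fromEdgeSet]
  exact ⟨⟨p, h, rfl⟩, by simp⟩

private lemma starG_nbhd (k Δ : ℕ) (a b : Fin k) (c : Bool) (u : Option (Fin k × Fin Δ))
    (h : u ∈ (StarG k Δ a b c).neighborSet none) :
    ∃ p, u = some p ∧ Mem' k Δ a b c p := by
  simp only [SimpleGraph.mem_neighborSet, StarG, SimpleGraph.fromEdgeSet_adj,
    Set.mem_setOf_eq] at h
  obtain ⟨⟨p, hp, he⟩, hne⟩ := h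
  rw [Sym2.eq_iff] at he
  rcases he with ⟨-, hu⟩ | ⟨hu, -⟩
  · exact ⟨p, hu, hp⟩
  · exact absurd hu (by simp)

private lemma starG_deg (k Δ : ℕ) (hΔ : 2 ≤ Δ) (hEven : Even Δ) (a b : Fin k) (c : Bool)
    (v : Option (Fin k × Fin Δ)) : ((StarG k Δ a b c).neighborSet v).ncard ≤ Δ := by
  have hE : Δ % 2 = 0 := Nat.even_iff.mp hEven
  have hpos : 0 < Δ / 2 := by omega
  match v with
  | some q =>
    have hsub : (StarG k Δ a b c).neighborSet (some q) ⊆ {none} := by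
      intro u hu
      simp only [SimpleGraph.mem_neighborSet, StarG, SimpleGraph.fromEdgeSet_adj,
        Set.mem_setOf_eq] at hu
      obtain ⟨⟨p, hp, he⟩, hne⟩ := hu
      rw [Sym2.eq_iff] at he
      rcases he with ⟨hq, -⟩ | ⟨-, hu⟩
      · exact absurd hq (by simp)
      · simp [hu]
    calc ((StarG k Δ a b c).neighborSet (some q)).ncard
        ≤ ({none} : Set (Option (Fin k × Fin Δ))).ncard :=
          Set.ncard_le_ncard hsub (Set.finite_singleton _)
      _ = 1 := Set.ncard_singleton _
      _ ≤ Δ := by omega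
  | none =>
    -- injection into Bool × Fin (Δ/2)
    have hmod : ∀ t : Fin Δ, t.val % (Δ / 2) = if Δ / 2 ≤ t.val then t.val - Δ / 2 else t.val := by
      intro t
      have ht := t.isLt
      rcases le_or_gt (Δ / 2) t.val with h | h
      · rw [if_pos h, Nat.mod_eq_sub_mod h, Nat.mod_eq_of_lt (by omega)]
      · rw [if_neg (not_le.mpr h), Nat.mod_eq_of_lt h]
    set f : Option (Fin k × Fin Δ) → Bool × Fin (Δ / 2) := fun u =>
      match u with
      | none => (false, ⟨0, hpos⟩)
      | some (j, t) => ((if a = b then Half Δ t else decide (j = b)),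
          ⟨t.val % (Δ / 2), Nat.mod_lt _ hpos⟩) with hf
    have hinj : Set.InjOn f ((StarG k Δ a b c).neighborSet none) := by
      intro u₁ h₁ u₂ h₂ hfe
      obtain ⟨⟨j₁, t₁⟩, rfl, hm₁⟩ := starG_nbhd k Δ a b c u₁ h₁
      obtain ⟨⟨j₂, t₂⟩, rfl, hm₂⟩ := starG_nbhd k Δ a b c u₂ h₂
      simp only [hf, Prod.mk.injEq, Fin.mk.injEq] at hfe
      obtain ⟨hfst, hsnd⟩ := hfe
      rw [hmod t₁, hmod t₂] at hsnd
      -- key: recover (j, Half t) pair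
      have hkey : j₁ = j₂ ∧ Half Δ t₁ = Half Δ t₂ := by
        rcases eq_or_ne a b with rfl | hab
        · rw [if_pos rfl, if_pos rfl] at hfst
        -- when a = b, Mem' forces j = a
          have hj₁ : j₁ = a := by rcases hm₁ with ⟨h, -⟩ | ⟨h, -⟩ <;> exact h
          have hj₂ : j₂ = a := by rcases hm₂ with ⟨h, -⟩ | ⟨h, -⟩ <;> exact h
          exact ⟨hj₁.trans hj₂.symm, hfst⟩
        · rw [if_neg hab, if_neg hab] at hfst
          by_cases hb₁ : j₁ = b
          · have hb₂ : j₂ = b := by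
              by_contra hc2
              simp [hb₁, hc2] at hfst
            have hh₁ : Half Δ t₁ = (if a < b then c else !c) := by
              rcases hm₁ with ⟨h, -⟩ | ⟨-, h⟩
              · exact absurd (hb₁ ▸ h) hab.symm
              · exact h
            have hh₂ : Half Δ t₂ = (if a < b then c else !c) := by
              rcases hm₂ with ⟨h, -⟩ | ⟨-, h⟩
              · exact absurd (hb₂ ▸ h) hab.symm
              · exact h
            exact ⟨hb₁.trans hb₂.symm, hh₁.trans hh₂.symm⟩
          · have hb₂ : j₂ ≠ b := by
              by_contra hc2
              simp [hb₁, hc2] at hfst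
            have hh₁ : j₁ = a ∧ Half Δ t₁ = c := by
              rcases hm₁ with h | ⟨h, -⟩
              · exact h
              · exact absurd h hb₁
            have hh₂ : j₂ = a ∧ Half Δ t₂ = c := by
              rcases hm₂ with h | ⟨h, -⟩
              · exact h
              · exact absurd h hb₂
            exact ⟨hh₁.1.trans hh₂.1.symm, hh₁.2.trans hh₂.2.symm⟩
      obtain ⟨hj, hh⟩ := hkey
      have ht : t₁ = t₂ := by
        have h₁ := t₁.isLt
        have h₂ := t₂.isLt
        have hiff : (Δ / 2 ≤ t₁.val) ↔ (Δ / 2 ≤ t₂.val) := by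
          simpa [Half, decide_eq_decide] using hh
        apply Fin.ext
        split_ifs at hsnd with c1 c2 c2 <;> omega
      exact by rw [hj, ht]
    calc ((StarG k Δ a b c).neighborSet none).ncard
        ≤ (Set.univ : Set (Bool × Fin (Δ / 2))).ncard :=
          Set.ncard_le_ncard_of_injOn f (fun _ _ => Set.mem_univ _) hinj Set.finite_univ
      _ = 2 * (Δ / 2) := by
          rw [Set.ncard_univ, Nat.card_eq_fintype_card]
          simp [mul_comm]
      _ ≤ Δ := by omega

theorem simultaneous_coloring_lower_bound (ℓ Δ : ℕ) (hℓ : 2 ≤ ℓ) (hΔ : 2 ≤ Δ)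
    (hEven : Even Δ) :
    ∃ (V : Type) (_ : Fintype V) (G : Fin ℓ → SimpleGraph V),
      (∀ i v, ((G i).neighborSet v).ncard ≤ Δ) ∧
      ∀ (N : ℕ) (c : Sym2 V → Fin N), Simultaneous G c →
        ⌊Real.sqrt ((ℓ : ℝ) / 2)⌋₊ * Δ ≤ N := by
  set k := ⌊Real.sqrt ((ℓ : ℝ) / 2)⌋₊ with hkdef
  have hsq : (k : ℝ) ≤ Real.sqrt ((ℓ : ℝ) / 2) := by
    rw [hkdef]; exact Nat.floor_le (Real.sqrt_nonneg _)
  have hk2 : k * (k * 2) ≤ ℓ := by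
    have hs := Real.sq_sqrt (show (0 : ℝ) ≤ (ℓ : ℝ) / 2 by positivity)
    have h2 : ((k * (k * 2) : ℕ) : ℝ) ≤ (ℓ : ℝ) := by
      push_cast
      nlinarith [Real.sqrt_nonneg ((ℓ : ℝ) / 2), (show (0 : ℝ) ≤ (k : ℝ) from Nat.cast_nonneg k)]
    exact_mod_cast h2
  refine ⟨Option (Fin k × Fin Δ), inferInstance, ?_⟩
  set n₀ := Fintype.card (Fin k × Fin k × Bool) with hn₀def
  have hn₀ : n₀ = k * (k * 2) := by simp [hn₀def]
  set E := Fintype.equivFin (Fin k × Fin k × Bool) with hEdef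
  set G : Fin ℓ → SimpleGraph (Option (Fin k × Fin Δ)) := fun i =>
    if h : i.val < n₀ then
      StarG k Δ (E.symm ⟨i.val, h⟩).1 (E.symm ⟨i.val, h⟩).2.1 (E.symm ⟨i.val, h⟩).2.2
    else ⊥ with hGdef
  refine ⟨G, ?_, ?_⟩
  · intro i v
    by_cases h : i.val < n₀
    · rw [hGdef]
      simp only [dif_pos h]
      exact starG_deg k Δ hΔ hEven _ _ _ v
    · rw [hGdef]
      simp only [dif_neg h]
      have hbot : (⊥ : SimpleGraph (Option (Fin k × Fin Δ))).neighborSet v = ∅ := by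
        ext u; simp [SimpleGraph.neighborSet]
      rw [hbot, Set.ncard_empty]
      omega
  · intro N c hc
    have key : Function.Injective (fun p : Fin k × Fin Δ => c s(none, some p)) := by
      intro x y hxy
      by_contra hne
      obtain ⟨a, b, cc, hx, hy⟩ := cover k Δ x y
      have hlt : (E (a, b, cc)).val < n₀ := (E (a, b, cc)).isLt
      set i : Fin ℓ := ⟨(E (a, b, cc)).val, lt_of_lt_of_le hlt (hn₀ ▸ hk2)⟩ with hidef
      have hGi : G i = StarG k Δ a b cc := by
        rw [hGdef]
        simp only [dif_pos (show i.val < n₀ from hlt)]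
        have heq : (⟨i.val, hlt⟩ : Fin n₀) = E (a, b, cc) := Fin.ext rfl
        rw [heq, Equiv.symm_apply_apply]
      have hcne : c s(none, some x) ≠ c s(none, some y) := by
        apply hc i _ (by rw [hGi]; exact starG_edge k Δ a b cc x hx) _
          (by rw [hGi]; exact starG_edge k Δ a b cc y hy)
        · intro heq
          rw [Sym2.eq_iff] at heq
          rcases heq with ⟨-, h⟩ | ⟨h, -⟩
          · exact hne (by simpa using h)
          · exact absurd h (by simp)
        · exact ⟨none, by simp, by simp⟩
      exact hcne hxy
    have hcard := Fintype.card_le_of_injective _ key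
    simpa using hcard
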